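/- Assume θ ∈ [0, π/2] (equivalently ε ≤ 0) and that 4p(z)³ + 27q(z)² ≤ 0 for all z ∈ (0,1). Then the sum t₀(z) + t₁(z) of the two largest roots is monotone increasing as a function of z on (0,1). -/

import Mathlib

lemma cubic_helper (Pz Qz gz S : ℝ) (hPz : Pz < 0)
    (hdisc : 4*Pz^3 + 27*Qz^2 ≤ 0)
    (hgz : gz = (3/2) * (Qz / Pz) * Real.sqrt (-3 / Pz))
    (hS : S = 2 * Real.sqrt (-Pz/3) * Real.cos ((1/3) * Real.arccos gz)
        + 2 * Real.sqrt (-Pz/3) * Real.cos ((1/3) * Real.arccos gz - 2 * Real.pi / 3)) :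
    S^3 + Pz*S - Qz = 0 ∧ Real.sqrt (-Pz/3) ≤ S ∧ S ≤ 2 * Real.sqrt (-Pz/3) := by
  obtain ⟨m, hmdef⟩ : ∃ m, Real.sqrt (-Pz/3) = m := ⟨_, rfl⟩
  rw [hmdef] at hS ⊢
  have hm2 : m^2 = -Pz/3 := by rw [← hmdef]; exact Real.sq_sqrt (by linarith)
  have hm0 : 0 < m := by rw [← hmdef]; exact Real.sqrt_pos.mpr (by linarith)
  have hPne : Pz ≠ 0 := ne_of_lt hPz
  have hmne : m ≠ 0 := ne_of_gt hm0
  have hPz' : Pz = -3*m^2 := by rw [hm2]; ring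
  have hsqrtinv : Real.sqrt (-3 / Pz) = 1/m := by
    rw [hPz', show -3/(-3*m^2) = (1/m)^2 by field_simp]
    exact Real.sqrt_sq (by positivity)
  have hgm : gz = -Qz/(2*m^3) := by
    rw [hgz, hsqrtinv, hPz']; field_simp
  have hq : 2*m^3*gz = -Qz := by rw [hgm]; field_simp
  have hg2 : gz^2 ≤ 1 := by
    have e : gz^2 * (4*m^6) = Qz^2 := by linear_combination (2*m^3*gz - Qz)*hq
    have e2 : 27*Qz^2 ≤ 108*m^6 := by
      have h4 : -4*Pz^3 = 108*m^6 := by rw [hPz']; ring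
      linarith
    have h6 : 0 < m^6 := pow_pos hm0 6
    nlinarith [h6, e, e2]
  have hga : -1 ≤ gz := by nlinarith [sq_nonneg (gz+1)]
  have hgb : gz ≤ 1 := by nlinarith [sq_nonneg (gz-1)]
  obtain ⟨φ, hφdef⟩ : ∃ φ, Real.arccos gz = φ := ⟨_, rfl⟩
  rw [hφdef] at hS
  have hφ0 : 0 ≤ φ := hφdef ▸ Real.arccos_nonneg _
  have hφπ : φ ≤ Real.pi := hφdef ▸ Real.arccos_le_pi _
  have hcosφ : Real.cos φ = gz := by rw [← hφdef]; exact Real.cos_arccos hga hgb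
  obtain ⟨ψ, hψdef⟩ : ∃ ψ, (1/3)*φ - Real.pi/3 = ψ := ⟨_, rfl⟩
  have hcossum : Real.cos ((1/3)*φ) + Real.cos ((1/3)*φ - 2*Real.pi/3) = Real.cos ψ := by
    have h2 : Real.cos (2*Real.pi/3) = -(1/2) := by
      rw [show 2*Real.pi/3 = Real.pi - Real.pi/3 by ring, Real.cos_pi_sub, Real.cos_pi_div_three]
    have h3 : Real.sin (2*Real.pi/3) = Real.sqrt 3 / 2 := by
      rw [show 2*Real.pi/3 = Real.pi - Real.pi/3 by ring, Real.sin_pi_sub, Real.sin_pi_div_three]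
    rw [← hψdef, Real.cos_sub, Real.cos_sub, h2, h3, Real.cos_pi_div_three, Real.sin_pi_div_three]
    ring
  have hSψ : S = 2*m*Real.cos ψ := by rw [hS, ← hcossum]; ring
  have hcψ1 : Real.cos ψ ≤ 1 := Real.cos_le_one ψ
  have hcψhalf : 1/2 ≤ Real.cos ψ := by
    have e : Real.cos ψ = Real.cos (Real.pi/3 - (1/3)*φ) := by
      rw [show Real.pi/3 - (1/3)*φ = -ψ by rw [← hψdef]; ring, Real.cos_neg]
    have hmono := Real.cos_le_cos_of_nonneg_of_le_pi
      (by linarith : (0:ℝ) ≤ Real.pi/3 - (1/3)*φ)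
      (by linarith [Real.pi_pos] : Real.pi/3 ≤ Real.pi)
      (by linarith : Real.pi/3 - (1/3)*φ ≤ Real.pi/3)
    rw [Real.cos_pi_div_three] at hmono
    rw [e]; linarith
  have h3ψ : Real.cos (3*ψ) = -gz := by
    rw [show 3*ψ = -(Real.pi - φ) by rw [← hψdef]; ring, Real.cos_neg, Real.cos_pi_sub, hcosφ]
  have h' : 4*(Real.cos ψ)^3 - 3*Real.cos ψ = -gz := by
    rw [← Real.cos_three_mul, h3ψ]
  refine ⟨?_, ?_, ?_⟩
  · rw [hSψ, hPz']
    linear_combination 2*m^3*h' - hq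
  · rw [hSψ]; nlinarith
  · rw [hSψ]; nlinarith

lemma lem_pneg (s2 z : ℝ) (hs20 : 0 ≤ s2) (hs2le : s2 ≤ 1/3) (hz0 : 0 < z) (hz1 : z < 1) :
    s2 - 1/3 - s2*z^2 < 0 := by
  have h1 : (0:ℝ) < 1 - z^2 := by nlinarith [mul_pos hz0 (sub_pos.2 hz1)]
  nlinarith [mul_nonneg (by linarith : (0:ℝ) ≤ 1/3 - s2) h1.le, mul_pos hz0 hz0]

lemma lem_cubic_strict (my Sx Sy Qy : ℝ)
    (hroot : Sy^3 + (-3*my^2)*Sy - Qy = 0) (hmy0 : 0 ≤ my) (hmy1 : my ≤ Sy)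
    (hlt : Sy < Sx) : 0 < Sx^3 + (-3*my^2)*Sx - Qy := by
  have hQy : Qy = Sy^3 - 3*my^2*Sy := by linear_combination -hroot
  rw [hQy]
  nlinarith [mul_pos (mul_pos (show (0:ℝ) < Sx - Sy by linarith)
      (show (0:ℝ) < Sx - Sy by linarith)) (show (0:ℝ) < Sx + 2*Sy by linarith),
    mul_nonneg (mul_nonneg (show (0:ℝ) ≤ Sx - Sy by linarith)
      (show (0:ℝ) ≤ Sy - my by linarith)) (show (0:ℝ) ≤ Sy + my by linarith)]

lemma lem_two_sided (s2 s3 c x y Sx : ℝ) (hx0 : 0 < x) (hxy : x < y)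
    (hs3c : 0 ≤ s3*c)
    (hrx : Sx^3 + (s2 - 1/3 - s2*x^2)*Sx
      - (s2/3 - s3 - 2/27 + (3*s3 - s2/3)*x^2 + (-2*s3*c)*x^3) = 0)
    (hcond : 0 ≤ s2*Sx + (3*s3 - s2/3) + (3/2)*(-2*s3*c)*y) :
    Sx^3 + (s2 - 1/3 - s2*y^2)*Sx
      - (s2/3 - s3 - 2/27 + (3*s3 - s2/3)*y^2 + (-2*s3*c)*y^3) ≤ 0 := by
  have hyx : (0:ℝ) ≤ y^2 - x^2 := by nlinarith
  nlinarith [hrx, mul_nonneg hyx hcond,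
    mul_nonneg (mul_nonneg (sq_nonneg (y-x)) (by linarith : (0:ℝ) ≤ y + 2*x)) hs3c]

lemma lem_const (s2 c z mz Sz : ℝ) (hz0 : 0 < z) (hz1 : z < 1)
    (hs20 : 0 ≤ s2) (hs2le : s2 ≤ 1/3)
    (hmz : 3*mz^2 = 1/3 - s2 + s2*z^2) (hmz0 : 0 ≤ mz) (hSm : mz ≤ Sz)
    (hroot : Sz^3 + (s2 - 1/3 - s2*z^2)*Sz - (s2/3 - 2/27 - (s2/3)*z^2) = 0) :
    Sz = 1/3 := by
  have hP' : s2 - 1/3 - s2*z^2 = -3*mz^2 := by linarith [hmz]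
  have hroot3 : Sz^3 + (-3*mz^2)*Sz - (s2/3 - 2/27 - (s2/3)*z^2) = 0 := by
    rw [← hP']; exact hroot
  have h13 : (1/3:ℝ)^3 + (-3*mz^2)*(1/3) - (s2/3 - 2/27 - (s2/3)*z^2) = 0 := by
    linear_combination (-1/3)*hmz
  have hz2 : (0:ℝ) ≤ 1 - z^2 := by nlinarith [mul_pos hz0 (sub_pos.2 hz1)]
  have hmle : mz ≤ 1/3 := by
    nlinarith [sq_nonneg (mz - 1/3), mul_nonneg hs20 hz2]
  rcases lt_trichotomy Sz (1/3) with h | h | h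
  · exfalso
    have := lem_cubic_strict mz (1/3) Sz (s2/3 - 2/27 - (s2/3)*z^2) hroot3 hmz0 hSm h
    linarith [h13, this]
  · exact h
  · exfalso
    have := lem_cubic_strict mz Sz (1/3) (s2/3 - 2/27 - (s2/3)*z^2) h13 hmz0 hmle h
    linarith [hroot3, this]

set_option maxHeartbeats 1000000 in
lemma lem_W (s2 s3 c z mz Sz : ℝ) (hz0 : 0 < z) (hz1 : z < 1)
    (hc0 : 0 ≤ c) (hc1 : c ≤ 1) (hs3 : 0 < s3) (hs32 : s3 ≤ s2) (hs2lt : s2 < 1/3)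
    (hmz : 3*mz^2 = 1/3 - s2 + s2*z^2) (hmz0 : 0 ≤ mz) (hSm : mz ≤ Sz)
    (hroot : Sz^3 + (s2 - 1/3 - s2*z^2)*Sz
      - (s2/3 - s3 - 2/27 + (3*s3 - s2/3)*z^2 + (-2*s3*c)*z^3) = 0) :
    0 < s2*Sz + (3*s3 - s2/3) + (3/2)*(-2*s3*c)*z := by
  have hs2pos : 0 < s2 := lt_of_lt_of_le hs3 hs32
  have h1z2 : (0:ℝ) < 1 - z^2 := by nlinarith [mul_pos hz0 (sub_pos.2 hz1)]
  have hmzlt : mz < 1/3 := by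
    nlinarith [mul_pos hs2pos h1z2, sq_nonneg (mz - 1/3)]
  have hmzgt : z/3 < mz := by
    nlinarith [mul_pos (show (0:ℝ) < 1/3 - s2 by linarith) h1z2,
      (by linarith : (0:ℝ) ≤ z/3 + mz)]
  obtain ⟨K, hK⟩ : ∃ a, 1/9 + Sz/3 + Sz^2 + (s2 - 1/3 - s2*z^2) = a := ⟨_, rfl⟩
  have hKpos : 0 < K := by
    rw [← hK]
    nlinarith [mul_pos (show (0:ℝ) < 2*mz + 1/3 by linarith)
        (show (0:ℝ) < 1/3 - mz by linarith),
      mul_nonneg (show (0:ℝ) ≤ Sz - mz by linarith)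
        (show (0:ℝ) ≤ 1/3 + Sz + mz by linarith), hmz]
  have hF13 : (1/3 - Sz)*K = s3*(1 - 3*z^2 + 2*c*z^3) := by
    rw [← hK]; linear_combination (-1)*hroot
  have hK0pos : (0:ℝ) < 1/9 + mz/3 - 2*mz^2 := by
    nlinarith [mul_pos (show (0:ℝ) < 2*mz + 1/3 by linarith)
      (show (0:ℝ) < 1/3 - mz by linarith)]
  have hKge : 1/9 + mz/3 - 2*mz^2 ≤ K := by
    rw [← hK]
    nlinarith [mul_nonneg (show (0:ℝ) ≤ Sz - mz by linarith)
      (show (0:ℝ) ≤ 1/3 + Sz + mz by linarith), hmz]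
  have hs2z : s2*(1-z^2) = 1/3 - 3*mz^2 := by linear_combination hmz
  have h1cz : (0:ℝ) < 1 - c*z := by
    nlinarith [mul_nonneg (by linarith : (0:ℝ) ≤ 1 - c) hz0.le]
  have st1 : 3*(1-z)*(1/9 + mz/3 - 2*mz^2) ≤ 3*(1-c*z)*K := by
    nlinarith [mul_nonneg (le_of_lt h1cz)
        (by linarith : (0:ℝ) ≤ K - (1/9 + mz/3 - 2*mz^2)),
      mul_nonneg hK0pos.le
        (by nlinarith [mul_nonneg (by linarith : (0:ℝ) ≤ 1 - c) hz0.le] :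
          (0:ℝ) ≤ z - c*z)]
  have st2 : s2*(1-3*z^2+2*c*z^3) ≤ s2*(1-3*z^2+2*z^3) := by
    nlinarith [mul_nonneg hs2pos.le
      (mul_nonneg (by positivity : (0:ℝ) ≤ z^3) (by linarith : (0:ℝ) ≤ 1 - c))]
  have st3 : s2*(1-3*z^2+2*z^3) < 3*(1-z)*(1/9 + mz/3 - 2*mz^2) := by
    have hkey : 0 < (1-z)*((1-3*mz)*(mz - z/3)) :=
      mul_pos (by linarith) (mul_pos (by linarith) (by linarith))
    have hmul : s2*(1-3*z^2+2*z^3)*(1+z) = (1/3-3*mz^2)*((1-z)*(1+2*z)) := by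
      linear_combination ((1-z)*(1+2*z))*hs2z
    have hfin : (1/3-3*mz^2)*((1-z)*(1+2*z)) + (1-z)*((1-3*mz)*(mz-z/3))
        = 3*(1-z)*(1/9+mz/3-2*mz^2)*(1+z) := by ring
    nlinarith [hkey, hmul, hfin, (by linarith : (0:ℝ) ≤ 1 + z)]
  have hclaim : 0 < 3*(1-c*z)*K - s2*(1 - 3*z^2 + 2*c*z^3) := by linarith
  have hWK : (s2*Sz + (3*s3 - s2/3) + (3/2)*(-2*s3*c)*z)*K
      = s3*(3*(1-c*z)*K - s2*(1 - 3*z^2 + 2*c*z^3)) := by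
    linear_combination (-s2)*hF13
  by_contra hW
  push_neg at hW
  nlinarith [mul_pos hs3 hclaim, hWK, mul_nonneg (neg_nonneg.2 hW) hKpos.le]

lemma lem_condy (s3 E Ww w y X : ℝ) (hs3 : 0 ≤ s3) (hEge : -2*s3 ≤ E)
    (hwy : w ≤ y) (hylew : y - w ≤ Ww/(3*s3+1)) (hWw : 0 < Ww)
    (hX : X + (3/2)*E*w = Ww) : 0 ≤ X + (3/2)*E*y := by
  have h5 : (3*s3+1)*(Ww/(3*s3+1)) = Ww := by field_simp
  have hδ : 0 < Ww/(3*s3+1) := div_pos hWw (by linarith)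
  nlinarith [mul_nonneg (by linarith : (0:ℝ) ≤ y - w) (by linarith : (0:ℝ) ≤ E + 2*s3),
    mul_nonneg (by linarith : (0:ℝ) ≤ 3*s3)
      (by linarith : (0:ℝ) ≤ Ww/(3*s3+1) - (y - w)), h5, hδ, hX]

lemma lem_eq13 (p0 p1 p2 : ℝ) (hsum : p0+p1+p2 = 1) (h13 : p0*p1+p0*p2+p1*p2 = 1/3) :
    p0 = 1/3 ∧ p1 = 1/3 ∧ p2 = 1/3 := by
  have hsq0 : (p0-p1)^2 + (p1-p2)^2 + (p0-p2)^2 = 0 := by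
    linear_combination (2*(p0+p1+p2+1))*hsum + (-6)*h13
  have e01 : (p0-p1)^2 = 0 :=
    le_antisymm (by nlinarith [sq_nonneg (p1-p2), sq_nonneg (p0-p2)]) (sq_nonneg _)
  have e12 : (p1-p2)^2 = 0 :=
    le_antisymm (by nlinarith [sq_nonneg (p0-p1), sq_nonneg (p0-p2)]) (sq_nonneg _)
  have h01 : p0 - p1 = 0 := pow_eq_zero_iff two_ne_zero |>.1 e01
  have h12 : p1 - p2 = 0 := pow_eq_zero_iff two_ne_zero |>.1 e12
  exact ⟨by linarith, by linarith, by linarith⟩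

lemma lem_lin (z1 z2 CS : ℝ) (hz1 : 0 < z1) (hle : z1 ≤ z2)
    (hm : z1/3 ≤ (2/3)*z1*CS) : (2/3)*z1*CS ≤ (2/3)*z2*CS := by
  have hCS : 0 ≤ CS := by nlinarith
  nlinarith [mul_nonneg hCS (by linarith : (0:ℝ) ≤ z2 - z1)]

set_option maxHeartbeats 2000000 in
/-- the sum `t₀(z) + t₁(z)` of the two largest roots is monotone
increasing on (0,1) when θ ∈ [0, π/2]. -/
theorem t0_plus_t1_monotone (p0 p1 p2 θ A B G D E : ℝ)
    (h0 : 0 ≤ p0) (h1 : 0 ≤ p1) (h2 : 0 ≤ p2) (hsum : p0 + p1 + p2 = 1)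
    (hθ : θ ∈ Set.Icc (0:ℝ) (Real.pi / 2))
    (hA : A = (1/6) * (1 - 3*p0^2 - 3*p1^2 - 3*p2^2))
    (hB : B = -(p0*p1 + p0*p2 + p1*p2))
    (hG : G = (1/27) * (3*p1 - 1) * (3*p2 - 1) * (3*p1 + 3*p2 - 2))
    (hD : D = (1/27) * (18*(p0*p1 + p0*p2 + p1*p2) -
        27*(p0^2*p1 + p0*p1^2 + p0^2*p2 + p1^2*p2 + p0*p2^2 + p1*p2^2)))
    (hE : E = -2*p0*p1*p2 * Real.cos θ)
    (P Q g : ℝ → ℝ)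
    (hP : P = fun z => A + B*z^2)
    (hQ : Q = fun z => G + D*z^2 + E*z^3)
    (hg : g = fun z => (3/2) * (Q z / P z) * Real.sqrt (-3 / P z))
    (hdisc : ∀ z ∈ Set.Ioo (0:ℝ) 1, 4*(P z)^3 + 27*(Q z)^2 ≤ 0)
    (t0 t1 : ℝ → ℝ)
    (ht0 : t0 = fun z => 2 * Real.sqrt (-(P z)/3) * Real.cos ((1/3) * Real.arccos (g z)))
    (ht1 : t1 = fun z => 2 * Real.sqrt (-(P z)/3) *
        Real.cos ((1/3) * Real.arccos (g z) - 2 * Real.pi / 3)) :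
    MonotoneOn (fun z => t0 z + t1 z) (Set.Ioo (0:ℝ) 1) := by
  obtain ⟨hθ0, hθp⟩ := hθ
  have hc1 : Real.cos θ ≤ 1 := Real.cos_le_one θ
  have hc0 : 0 ≤ Real.cos θ := Real.cos_nonneg_of_mem_Icc ⟨by linarith [Real.pi_pos], hθp⟩
  obtain ⟨c, hc⟩ : ∃ c, Real.cos θ = c := ⟨_, rfl⟩
  rw [hc] at hc0 hc1 hE
  obtain ⟨s2, hs2⟩ : ∃ a, p0*p1 + p0*p2 + p1*p2 = a := ⟨_, rfl⟩
  obtain ⟨s3, hs3⟩ : ∃ a, p0*p1*p2 = a := ⟨_, rfl⟩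
  have hs20 : 0 ≤ s2 := by rw [← hs2]; positivity
  have hs3nn : 0 ≤ s3 := by rw [← hs3]; positivity
  have hs2le : s2 ≤ 1/3 := by
    rw [← hs2]
    nlinarith [sq_nonneg (p0-p1), sq_nonneg (p1-p2), sq_nonneg (p0-p2)]
  have hs3les2 : s3 ≤ s2 := by
    rw [← hs2, ← hs3]
    nlinarith [mul_nonneg (mul_nonneg h0 h1) (by linarith : (0:ℝ) ≤ 1 - p2),
      mul_nonneg h0 h2, mul_nonneg h1 h2]
  have hA' : A = s2 - 1/3 := by
    rw [hA]; linear_combination (-(1/2)*(p0+p1+p2+1))*hsum + hs2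
  have hB' : B = -s2 := by rw [hB]; linear_combination -hs2
  have hD' : D = 3*s3 - s2/3 := by
    rw [hD]; linear_combination (-(p0*p1+p0*p2+p1*p2))*hsum + 3*hs3 - (1/3)*hs2
  have hG' : G = s2/3 - s3 - 2/27 := by
    rw [hG]; linear_combination (p1*p2-p1/3-p2/3)*hsum + (1/3)*hs2 - hs3
  have hE' : E = -2*s3*c := by rw [hE]; linear_combination (-2*c)*hs3
  have hPv : ∀ z : ℝ, P z = s2 - 1/3 - s2*z^2 := by
    intro z; simp only [hP]; rw [hA', hB']; ring
  have hQv : ∀ z : ℝ, Q z = s2/3 - s3 - 2/27 + (3*s3 - s2/3)*z^2 + (-2*s3*c)*z^3 := by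
    intro z; simp only [hQ]; rw [hG', hD', hE']
  have hPneg : ∀ z ∈ Set.Ioo (0:ℝ) 1, P z < 0 := by
    intro z hz
    rw [hPv]
    exact lem_pneg s2 z hs20 hs2le hz.1 hz.2
  have hpack : ∀ z ∈ Set.Ioo (0:ℝ) 1,
      (t0 z + t1 z)^3 + P z * (t0 z + t1 z) - Q z = 0 ∧
      Real.sqrt (-(P z)/3) ≤ t0 z + t1 z ∧ t0 z + t1 z ≤ 2*Real.sqrt (-(P z)/3) := by
    intro z hz
    exact cubic_helper (P z) (Q z) (g z) (t0 z + t1 z) (hPneg z hz) (hdisc z hz)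
      (by simp only [hg]) (by simp only [ht0, ht1])
  intro z1 hz1 z2 hz2 hle
  show t0 z1 + t1 z1 ≤ t0 z2 + t1 z2
  rcases eq_or_lt_of_le hle with heq | hlt
  · rw [heq]
  by_cases hs2case : s2 = 1/3
  · -- all p = 1/3
    have h13 : p0*p1 + p0*p2 + p1*p2 = 1/3 := hs2.trans hs2case
    obtain ⟨hp0, hp1, hp2⟩ := lem_eq13 p0 p1 p2 hsum h13
    have hs3v : s3 = 1/27 := by rw [← hs3, hp0, hp1, hp2]; norm_num
    have hPz13 : ∀ z : ℝ, P z = -(z^2)/3 := by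
      intro z; rw [hPv, hs2case]; ring
    have hQz13 : ∀ z : ℝ, Q z = -2*(1/27)*c*z^3 := by
      intro z; rw [hQv, hs2case, hs3v]; ring
    have hgc : ∀ z ∈ Set.Ioo (0:ℝ) 1, g z = c := by
      intro z hz
      have hzne : z ≠ 0 := ne_of_gt hz.1
      simp only [hg]
      rw [hQz13, hPz13]
      rw [show (-3:ℝ) / (-(z^2)/3) = (3/z)^2 by field_simp,
        Real.sqrt_sq (div_pos (by norm_num) hz.1).le]
      field_simp
      ring
    have hms : ∀ z ∈ Set.Ioo (0:ℝ) 1, Real.sqrt (-(P z)/3) = z/3 := by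
      intro z hz
      rw [hPz13, show -(-(z^2)/3)/3 = (z/3)^2 by ring, Real.sqrt_sq (by linarith [hz.1])]
    obtain ⟨hr1, hm1, _⟩ := hpack z1 hz1
    have e1 : t0 z1 + t1 z1 = 2*(z1/3) * Real.cos ((1/3)*Real.arccos c)
        + 2*(z1/3) * Real.cos ((1/3)*Real.arccos c - 2*Real.pi/3) := by
      simp only [ht0, ht1]
      rw [hms z1 hz1, hgc z1 hz1]
    have e2 : t0 z2 + t1 z2 = 2*(z2/3) * Real.cos ((1/3)*Real.arccos c)
        + 2*(z2/3) * Real.cos ((1/3)*Real.arccos c - 2*Real.pi/3) := by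
      simp only [ht0, ht1]
      rw [hms z2 hz2, hgc z2 hz2]
    obtain ⟨CS, hCS⟩ : ∃ a, Real.cos ((1/3)*Real.arccos c)
        + Real.cos ((1/3)*Real.arccos c - 2*Real.pi/3) = a := ⟨_, rfl⟩
    have e1' : t0 z1 + t1 z1 = (2/3)*z1*CS := by rw [e1, ← hCS]; ring
    have e2' : t0 z2 + t1 z2 = (2/3)*z2*CS := by rw [e2, ← hCS]; ring
    rw [hms z1 hz1, e1'] at hm1
    rw [e1', e2']
    exact lem_lin z1 z2 CS hz1.1 hle hm1
  have hs2lt : s2 < 1/3 := lt_of_le_of_ne hs2le hs2case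
  by_cases hs3case : s3 = 0
  · -- S ≡ 1/3
    have hconst : ∀ z ∈ Set.Ioo (0:ℝ) 1, t0 z + t1 z = 1/3 := by
      intro z hz
      obtain ⟨hroot, hm1, _⟩ := hpack z hz
      obtain ⟨Sz, hSz⟩ : ∃ a, t0 z + t1 z = a := ⟨_, rfl⟩
      rw [hSz] at hroot hm1 ⊢
      obtain ⟨mz, hmz⟩ : ∃ a, Real.sqrt (-(P z)/3) = a := ⟨_, rfl⟩
      rw [hmz] at hm1
      have hmz0 : 0 ≤ mz := hmz ▸ Real.sqrt_nonneg _
      have hmzsq : mz^2 = -(P z)/3 := by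
        rw [← hmz]; exact Real.sq_sqrt (by linarith [hPneg z hz])
      have hmz3 : 3*mz^2 = 1/3 - s2 + s2*z^2 := by
        rw [hPv z] at hmzsq; linear_combination 3*hmzsq
      rw [hPv z, hQv z] at hroot
      rw [hs3case] at hroot
      have hroot2 : Sz^3 + (s2 - 1/3 - s2*z^2)*Sz - (s2/3 - 2/27 - (s2/3)*z^2) = 0 := by
        linear_combination hroot
      exact lem_const s2 c z mz Sz hz.1 hz.2 hs20 hs2le hmz3 hmz0 hm1 hroot2
    rw [hconst z1 hz1, hconst z2 hz2]
  -- main case : s3 > 0, 0 < s2 < 1/3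
  have hs3pos : 0 < s3 := lt_of_le_of_ne hs3nn (Ne.symm hs3case)
  have key2 : ∀ x ∈ Set.Ioo (0:ℝ) 1, ∀ y ∈ Set.Ioo (0:ℝ) 1, x < y →
      0 ≤ s2 * (t0 x + t1 x) + D + (3/2)*E*y → t0 x + t1 x ≤ t0 y + t1 y := by
    intro x hx y hy hxy hcond
    by_contra hcon
    push_neg at hcon
    obtain ⟨hrx, hmx1, _⟩ := hpack x hx
    obtain ⟨hry, hmy1, _⟩ := hpack y hy
    obtain ⟨Sx, hSx⟩ : ∃ a, t0 x + t1 x = a := ⟨_, rfl⟩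
    obtain ⟨Sy, hSy⟩ : ∃ a, t0 y + t1 y = a := ⟨_, rfl⟩
    rw [hSx] at hrx hcon hcond
    rw [hSy] at hry hcon hmy1
    obtain ⟨my, hmy⟩ : ∃ a, Real.sqrt (-(P y)/3) = a := ⟨_, rfl⟩
    rw [hmy] at hmy1
    have hmy0 : 0 ≤ my := hmy ▸ Real.sqrt_nonneg _
    have hmysq : my^2 = -(P y)/3 := by
      rw [← hmy]; exact Real.sq_sqrt (by linarith [hPneg y hy])
    have hPy' : P y = -3*my^2 := by rw [hmysq]; ring
    have h1 : Sx^3 + P y * Sx - Q y ≤ 0 := by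
      rw [hPv x, hQv x] at hrx
      rw [hD', hE'] at hcond
      have := lem_two_sided s2 s3 c x y Sx hx.1 hxy (mul_nonneg hs3nn hc0) hrx hcond
      rw [hPv y, hQv y]
      exact this
    have h2 : 0 < Sx^3 + P y * Sx - Q y := by
      rw [hPy'] at hry
      have := lem_cubic_strict my Sx Sy (Q y) hry hmy0 hmy1 hcon
      rw [hPy']
      exact this
    linarith
  have hWpos : ∀ z ∈ Set.Ioo (0:ℝ) 1, 0 < s2*(t0 z + t1 z) + D + (3/2)*E*z := by
    intro z hz
    obtain ⟨hroot, hm1, _⟩ := hpack z hz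
    obtain ⟨Sz, hSz⟩ : ∃ a, t0 z + t1 z = a := ⟨_, rfl⟩
    rw [hSz] at hroot hm1 ⊢
    obtain ⟨mz, hmz⟩ : ∃ a, Real.sqrt (-(P z)/3) = a := ⟨_, rfl⟩
    rw [hmz] at hm1
    have hmz0 : 0 ≤ mz := hmz ▸ Real.sqrt_nonneg _
    have hmzsq : mz^2 = -(P z)/3 := by
      rw [← hmz]; exact Real.sq_sqrt (by linarith [hPneg z hz])
    have hmz3 : 3*mz^2 = 1/3 - s2 + s2*z^2 := by
      rw [hPv z] at hmzsq; linear_combination 3*hmzsq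
    rw [hPv z, hQv z] at hroot
    have := lem_W s2 s3 c z mz Sz hz.1 hz.2 hc0 hc1 hs3pos hs3les2 hs2lt hmz3 hmz0 hm1 hroot
    rw [hD', hE']
    exact this
  -- continuity
  have hsub : Set.Icc z1 z2 ⊆ Set.Ioo (0:ℝ) 1 :=
    fun t ht => ⟨lt_of_lt_of_le hz1.1 ht.1, lt_of_le_of_lt ht.2 hz2.2⟩
  have hPc : Continuous P := by
    rw [hP]; exact continuous_const.add (continuous_const.mul (continuous_pow 2))
  have hQc : Continuous Q := by
    rw [hQ]
    exact (continuous_const.add (continuous_const.mul (continuous_pow 2))).add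
      (continuous_const.mul (continuous_pow 3))
  have hPne' : ∀ t ∈ Set.Icc z1 z2, P t ≠ 0 := fun t ht => ne_of_lt (hPneg t (hsub ht))
  have hgcont : ContinuousOn g (Set.Icc z1 z2) := by
    rw [hg]
    exact (continuousOn_const.mul (hQc.continuousOn.div hPc.continuousOn hPne')).mul
      (Real.continuous_sqrt.comp_continuousOn
        (continuousOn_const.div hPc.continuousOn hPne'))
  have hsqc : Continuous (fun z => 2 * Real.sqrt (-(P z)/3)) :=
    continuous_const.mul (Real.continuous_sqrt.comp ((hPc.neg).div_const 3))
  have harc : ContinuousOn (fun z => (1/3) * Real.arccos (g z)) (Set.Icc z1 z2) :=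
    continuousOn_const.mul (Real.continuous_arccos.comp_continuousOn hgcont)
  have hScont : ContinuousOn (fun z => t0 z + t1 z) (Set.Icc z1 z2) := by
    simp only [ht0, ht1]
    exact (hsqc.continuousOn.mul (Real.continuous_cos.comp_continuousOn harc)).add
      (hsqc.continuousOn.mul
        (Real.continuous_cos.comp_continuousOn (harc.sub continuousOn_const)))
  -- sSup argument
  set T : Set ℝ := Set.Icc z1 z2 ∩ (fun z => t0 z + t1 z) ⁻¹' Set.Ici (t0 z1 + t1 z1)
    with hTdef
  have hTne : T.Nonempty := ⟨z1, ⟨le_refl z1, hlt.le⟩, Set.mem_preimage.mpr (Set.mem_Ici.mpr le_rfl)⟩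
  have hTbdd : BddAbove T := BddAbove.mono Set.inter_subset_left bddAbove_Icc
  have hTcl : IsClosed T := hScont.preimage_isClosed_of_isClosed isClosed_Icc isClosed_Ici
  have hwT : sSup T ∈ T := hTcl.csSup_mem hTne hTbdd
  obtain ⟨⟨hwz1, hwz2⟩, hwS⟩ := hwT
  have hwS' : t0 z1 + t1 z1 ≤ t0 (sSup T) + t1 (sSup T) := hwS
  rcases eq_or_lt_of_le hwz2 with heq2 | hwlt
  · rw [heq2] at hwS'; exact hwS'
  · exfalso
    have hwIoo : sSup T ∈ Set.Ioo (0:ℝ) 1 :=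
      ⟨lt_of_lt_of_le hz1.1 hwz1, lt_trans hwlt hz2.2⟩
    have hWw := hWpos (sSup T) hwIoo
    obtain ⟨Ww, hWwdef⟩ : ∃ a, s2*(t0 (sSup T) + t1 (sSup T)) + D + (3/2)*E*(sSup T) = a :=
      ⟨_, rfl⟩
    rw [hWwdef] at hWw
    have hδpos : 0 < Ww/(3*s3+1) := div_pos hWw (by linarith)
    set y := min z2 (sSup T + Ww/(3*s3+1)) with hydef
    have hwy : sSup T < y := lt_min hwlt (by linarith)
    have hyz2 : y ≤ z2 := min_le_left _ _
    have hyIoo : y ∈ Set.Ioo (0:ℝ) 1 := ⟨lt_trans hwIoo.1 hwy, lt_of_le_of_lt hyz2 hz2.2⟩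
    have hEge : -2*s3 ≤ E := by
      rw [hE']; nlinarith [mul_nonneg hs3nn (by linarith : (0:ℝ) ≤ 1 - c)]
    have hylew : y - sSup T ≤ Ww/(3*s3+1) := by
      have := min_le_right z2 (sSup T + Ww/(3*s3+1)); linarith
    have hcondy : 0 ≤ s2*(t0 (sSup T) + t1 (sSup T)) + D + (3/2)*E*y :=
      lem_condy s3 E Ww (sSup T) y (s2*(t0 (sSup T) + t1 (sSup T)) + D)
        hs3nn hEge hwy.le hylew hWw hWwdef
    have hSwy := key2 (sSup T) hwIoo y hyIoo hwy hcondy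
    have hyT : y ∈ T := ⟨⟨le_trans hwz1 hwy.le, hyz2⟩, Set.mem_preimage.mpr (Set.mem_Ici.mpr (le_trans hwS' hSwy))⟩
    have : y ≤ sSup T := le_csSup hTbdd hyT
    linarith
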